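/- For any λ ∈ [-1,1] and any real numbers r, s, t, one has √(f*((r s; t -r))) ≥ (1/2)(Θ_λ(r,s) + λt), where f*(N) = (1/4)·max{|N|² - 2 det N, (n₁₂ - n₂₁)²} for trace-free N. -/

import Mathlib

noncomputable def frobSq (M : Matrix (Fin 2) (Fin 2) ℝ) : ℝ := ∑ i, ∑ j, (M i j)^2

/-- f*(N) = (1/4)·max{|N|² - 2 det N, (n₁₂ - n₂₁)²} (for trace-free N). -/
noncomputable def fStar (N : Matrix (Fin 2) (Fin 2) ℝ) : ℝ :=
  (1/4) * max (frobSq N - 2 * N.det) ((N 0 1 - N 1 0)^2)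

noncomputable def Theta (l : ℝ) (z : ℝ × ℝ) : ℝ :=
  if 0 < z.2 ∧ (1 + l) * z.1^2 < (1 - l) * z.2^2 then
    (1 + l) * z.1^2 / |z.2| + |z.2|
  else if z.2 < 0 ∧ (1 - l) * z.1^2 < (1 + l) * z.2^2 then
    (1 - l) * z.1^2 / |z.2| + |z.2|
  else
    2 * |z.1| * Real.sqrt (1 - l^2) + l * z.2

-- Cauchy-Schwarz style lemma
lemma CS (l u a : ℝ) (ha : 0 ≤ a) (hl1 : -1 ≤ l) (hl2 : l ≤ 1) :
    a * Real.sqrt (1 - l^2) + l * u ≤ Real.sqrt (a^2 + u^2) := by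
  set c := Real.sqrt (1 - l^2) with hc
  have hc0 : 0 ≤ c := Real.sqrt_nonneg _
  have hc2 : c^2 = 1 - l^2 := Real.sq_sqrt (by nlinarith)
  rcases le_or_gt (a * c + l * u) 0 with h | h
  · exact h.trans (Real.sqrt_nonneg _)
  · rw [show a^2 + u^2 = (a^2+u^2) from rfl]
    have : (a * c + l * u)^2 ≤ a^2 + u^2 := by nlinarith [sq_nonneg (c*u - l*a)]
    calc a * c + l * u ≤ Real.sqrt ((a*c+l*u)^2) := by
          rw [Real.sqrt_sq h.le]
      _ ≤ Real.sqrt (a^2+u^2) := Real.sqrt_le_sqrt this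

lemma case1 (l r s t : ℝ) (hl1 : -1 ≤ l) (hl2 : l ≤ 1) (hs : 0 < s)
    (hcond : (1 + l) * r^2 ≤ (1 - l) * s^2) :
    (1 + l) * r^2 / s + s + l * t ≤ max (Real.sqrt (4*r^2 + (s+t)^2)) |s - t| := by
  set L := (1 + l) * r^2 / s + s + l * t with hL
  rcases le_or_gt L |s - t| with h | h
  · exact h.trans (le_max_right _ _)
  · refine le_trans ?_ (le_max_left _ _)
    have habs := abs_nonneg (s - t)
    have hL0 : 0 ≤ L := le_trans habs h.le
    have h1 : s - t < L := (le_abs_self _).trans_lt h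
    have h2 : t - s < L := (le_abs_self (t-s)).trans_lt (by rwa [abs_sub_comm])
    have hLs : L * s = (1 + l) * r^2 + s^2 + l * t * s := by
      rw [hL, add_mul, add_mul, div_mul_cancel₀ _ hs.ne']; ring
    have key : L^2 ≤ 4*r^2 + (s+t)^2 := by
      have hs2 : (0:ℝ) < s^2 := by positivity
      rw [← mul_le_mul_iff_of_pos_right hs2]
      have e1 : L^2 * s^2 = (L*s)^2 := by ring
      rw [e1, hLs]
      have h1' : (s - t) * s < (1 + l) * r^2 + s^2 + l * t * s := by
        calc (s-t)*s < L * s := by exact (mul_lt_mul_iff_of_pos_right hs).mpr h1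
          _ = _ := hLs
      have h2' : (t - s) * s < (1 + l) * r^2 + s^2 + l * t * s := by
        calc (t-s)*s < L * s := by exact (mul_lt_mul_iff_of_pos_right hs).mpr h2
          _ = _ := hLs
      have hc1 : 0 < (1+l)*(r^2+t*s) := by nlinarith [h1']
      have hc3 : 0 ≤ (1-l)*s^2 - (1+l)*r^2 := by linarith
      have hpl : 0 < 1 + l := by
        rcases lt_or_eq_of_le hl1 with h' | h'
        · linarith
        · exfalso; rw [← h'] at hc1; nlinarith [hc1]
      nlinarith [mul_nonneg hc1.le hc3,
        mul_nonneg (by linarith : (0:ℝ) ≤ 1 - l) (sq_nonneg ((1+l)*(r^2+t*s))), hpl,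
        mul_pos hpl hc1]
    calc L ≤ Real.sqrt (L^2) := by rw [Real.sqrt_sq hL0]
      _ ≤ _ := Real.sqrt_le_sqrt key

theorem fStar_lower_bound (l : ℝ) (hl : l ∈ Set.Icc (-1 : ℝ) 1) (r s t : ℝ) :
    Real.sqrt (fStar !![r, s; t, -r]) ≥ (1/2) * (Theta l (r, s) + l * t) := by
  obtain ⟨hl1, hl2⟩ := hl
  have hfs : fStar !![r, s; t, -r]
      = (1/4) * max (4*r^2 + (s+t)^2) ((s - t)^2) := by
    simp [fStar, frobSq, Matrix.det_fin_two, Fin.sum_univ_succ]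
    ring_nf
  have hkey : Theta l (r, s) + l * t ≤ max (Real.sqrt (4*r^2 + (s+t)^2)) |s - t| := by
    unfold Theta
    simp only
    split_ifs with h1 h2
    · obtain ⟨hs, hcond⟩ := h1
      rw [abs_of_pos hs]
      have := case1 l r s t hl1 hl2 hs hcond.le
      linarith [this]
    · obtain ⟨hs, hcond⟩ := h2
      have hs' : 0 < -s := by linarith
      have := case1 (-l) r (-s) (-t) (by linarith) (by linarith) hs'
        (by nlinarith [hcond.le])
      rw [abs_of_neg hs]
      have e1 : (4*r^2 + (-s + -t)^2) = 4*r^2 + (s+t)^2 := by ring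
      have e2 : |-s - -t| = |s - t| := by rw [show -s - -t = -(s - t) by ring, abs_neg]
      rw [e1, e2] at this
      have e3 : (1 + -l) * r ^ 2 / -s + -s + -l * -t = (1 - l) * r^2 / -s + -s + l*t := by
        ring_nf
      rw [e3] at this
      linarith [this]
    · refine le_trans ?_ (le_max_left _ _)
      have := CS l (s + t) (2 * |r|) (by positivity) hl1 hl2
      have e : (2*|r|)^2 = 4*r^2 := by rw [mul_pow, sq_abs]; ring
      rw [e] at this
      linarith [this]
  have h14 : Real.sqrt (fStar !![r, s; t, -r])
      = (1/2) * Real.sqrt (max (4*r^2 + (s+t)^2) ((s - t)^2)) := by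
    rw [hfs, show (1/4 : ℝ) = (1/2)^2 by norm_num, Real.sqrt_mul (by positivity),
      Real.sqrt_sq (by norm_num)]
  rw [ge_iff_le, h14]
  have hmax : max (Real.sqrt (4*r^2 + (s+t)^2)) |s - t|
      ≤ Real.sqrt (max (4*r^2 + (s+t)^2) ((s - t)^2)) := by
    apply max_le
    · exact Real.sqrt_le_sqrt (le_max_left _ _)
    · rw [← Real.sqrt_sq_eq_abs]
      exact Real.sqrt_le_sqrt (le_max_right _ _)
  have := hkey.trans hmax
  linarith
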